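/- Let α = 0 0 1² 0 0 1⁴ 0 0 1⁶ ⋯ (blocks 0 0 1^{2n} for n = 1, 2, …) and β = 0 1 0 1² 0 1³ ⋯ (blocks 0 1^n). Then there is no quasi-isometry from α to β that is eventually injective, i.e., no quasi-isometry f such that f is injective on [N, ∞) for some N. -/
import Mathlib


def IsQI {Γ : Type*} (α β : ℕ → Γ) (f : ℕ → ℕ) (A B : ℝ) : Prop :=
  1 ≤ A ∧ 0 ≤ B ∧ (∀ n, α n = β (f n)) ∧
  (∀ x y : ℕ, (1 / A) * |(x : ℝ) - (y : ℝ)| - B ≤ |(f x : ℝ) - (f y : ℝ)| ∧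
      |(f x : ℝ) - (f y : ℝ)| ≤ A * |(x : ℝ) - (y : ℝ)| + B) ∧
  (∀ m : ℕ, ∃ x : ℕ, |(m : ℝ) - (f x : ℝ)| ≤ A)

/-- `α ≤_QI β`: there is a quasi-isometry from `α` to `β`. -/
def QI {Γ : Type*} (α β : ℕ → Γ) : Prop := ∃ f A B, IsQI α β f A B

open scoped Classical

/-- Total length of the first `k` blocks `0 0 1^{2n}` (for `n = 1, …, k`). -/
def aSum (k : ℕ) : ℕ := (Finset.range k).sum (fun i => 2 * (i + 1) + 2)

/-- Total length of the first `k` blocks `0 1^n` (for `n = 1, …, k`). -/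
def bSum (k : ℕ) : ℕ := (Finset.range k).sum (fun i => (i + 1) + 1)

/-- `α = 0 0 1² 0 0 1⁴ 0 0 1⁶ ⋯`: position `i` is `0` iff it is one of the first two
positions of its block. -/
noncomputable def alphaStr : ℕ → Fin 2 := fun i =>
  if ∃ k ≤ i, aSum k ≤ i ∧ i < aSum k + 2 then 0 else 1

/-- `β = 0 1 0 1² 0 1³ ⋯`: position `i` is `0` iff it is the first position of
its block. -/
noncomputable def betaStr : ℕ → Fin 2 := fun i =>
  if ∃ k ≤ i, bSum k = i then 0 else 1

lemma bSum_succ (k : ℕ) : bSum (k + 1) = bSum k + (k + 2) := by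
  simp [bSum, Finset.sum_range_succ]

lemma bSum_strictMono : StrictMono bSum :=
  strictMono_nat_of_lt_succ (fun n => by rw [bSum_succ]; omega)

lemma aSum_ge (k : ℕ) : k ≤ aSum k := by
  induction k with
  | zero => simp [aSum]
  | succ n ih => simp only [aSum, Finset.sum_range_succ] at *; omega

lemma alphaStr_zero {k j : ℕ} (h1 : aSum k ≤ j) (h2 : j < aSum k + 2) :
    alphaStr j = 0 := by
  unfold alphaStr
  rw [if_pos ⟨k, le_trans (aSum_ge k) h1, h1, h2⟩]

lemma betaStr_zero {j : ℕ} (h : betaStr j = 0) : ∃ k, bSum k = j := by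
  unfold betaStr at h
  split at h
  · next h' => obtain ⟨k, _, hk⟩ := h'; exact ⟨k, hk⟩
  · exact absurd h (by decide)

/-- No quasi-isometry from `α` to `β` is eventually injective. -/
theorem no_eventually_injective_QI :
    ¬ ∃ (f : ℕ → ℕ) (A B : ℝ) (N : ℕ), IsQI alphaStr betaStr f A B ∧
        ∀ x y : ℕ, N ≤ x → N ≤ y → f x = f y → x = y := by
  rintro ⟨f, A, B, N, ⟨hA, hB, hcolor, hqi, _⟩, hinj⟩
  have hA0 : (0:ℝ) < A := lt_of_lt_of_le one_pos hA
  set t : ℕ := ⌈A + B⌉₊ with ht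
  -- choose K large
  obtain ⟨K0, hK0⟩ := exists_nat_gt (A * (B + (f 0 : ℝ) + (bSum t : ℕ) + 1))
  set K : ℕ := max N K0 with hK
  set p : ℕ := aSum K with hp
  have hpK : K ≤ p := aSum_ge K
  have hpN : N ≤ p := le_trans (le_max_left _ _) hpK
  -- f p and f (p+1) are zeros of β, and large
  have hz : ∀ x : ℕ, p ≤ x → x < p + 2 → (bSum t : ℝ) < (f x : ℝ) ∧ ∃ k, bSum k = f x := by
    intro x hx1 hx2
    have hcol : betaStr (f x) = 0 := by
      rw [← hcolor x]; exact alphaStr_zero hx1 hx2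
    refine ⟨?_, betaStr_zero hcol⟩
    have hlow := (hqi x 0).1
    have hxK : (K : ℝ) ≤ (x : ℝ) := by
      exact_mod_cast le_trans hpK hx1
    have hK0' : (A * (B + (f 0 : ℝ) + (bSum t : ℕ) + 1)) < (K : ℝ) := by
      exact lt_of_lt_of_le (lt_of_lt_of_le hK0 (by exact_mod_cast le_max_right N K0)) le_rfl
    have h1 : (1 / A) * |(x : ℝ) - (0:ℕ)| = (x : ℝ) / A := by
      rw [Nat.cast_zero, sub_zero, abs_of_nonneg (Nat.cast_nonneg x)]
      ring
    have h2 : |(f x : ℝ) - (f 0 : ℝ)| ≤ (f x : ℝ) + (f 0 : ℝ) := by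
      rw [abs_sub_le_iff]
      constructor <;>
        linarith [show (0:ℝ) ≤ (f x : ℝ) from Nat.cast_nonneg _,
          show (0:ℝ) ≤ (f 0 : ℝ) from Nat.cast_nonneg _]
    have h3 : (x : ℝ) / A - B - (f 0 : ℝ) ≤ (f x : ℝ) := by
      rw [h1] at hlow; linarith
    have h4 : (B + (f 0 : ℝ) + (bSum t : ℕ) + 1) < (x : ℝ) / A := by
      rw [lt_div_iff₀ hA0]
      nlinarith
    linarith
  obtain ⟨hfp_big, k, hk⟩ := hz p le_rfl (by omega)
  obtain ⟨hfp1_big, m, hm⟩ := hz (p + 1) (by omega) (by omega)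
  -- distinctness
  have hne : f p ≠ f (p + 1) := fun h => by
    have := hinj p (p + 1) hpN (by omega) h; omega
  have hkm : k ≠ m := fun h => hne (by rw [← hk, ← hm, h])
  -- both k, m > t
  have hkt : t < k := by
    by_contra h
    have : bSum k ≤ bSum t := bSum_strictMono.monotone (by omega)
    rw [hk] at this
    exact absurd hfp_big (not_lt.mpr (by exact_mod_cast this))
  have hmt : t < m := by
    by_contra h
    have : bSum m ≤ bSum t := bSum_strictMono.monotone (by omega)
    rw [hm] at this
    exact absurd hfp1_big (not_lt.mpr (by exact_mod_cast this))
  -- gap lower bound in ℕ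
  have hgap : f p + (t + 2) ≤ f (p + 1) ∨ f (p + 1) + (t + 2) ≤ f p := by
    rcases lt_or_gt_of_ne hkm with h | h
    · left
      have : bSum k + (k + 2) ≤ bSum m := by
        rw [← bSum_succ]; exact bSum_strictMono.monotone (by omega)
      omega
    · right
      have : bSum m + (m + 2) ≤ bSum k := by
        rw [← bSum_succ]; exact bSum_strictMono.monotone (by omega)
      omega
  -- upper bound from QI
  have hup := (hqi p (p + 1)).2
  have habs : |(p : ℝ) - ((p + 1 : ℕ) : ℝ)| = 1 := by
    push_cast; rw [abs_of_nonpos (by linarith)]; ring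
  rw [habs, mul_one] at hup
  -- contradiction
  have htAB : A + B ≤ (t : ℝ) := Nat.le_ceil _
  have hlow2 : (t : ℝ) + 2 ≤ |(f p : ℝ) - (f (p + 1) : ℝ)| := by
    rcases hgap with h | h
    · have h' : (f p : ℝ) + ((t : ℝ) + 2) ≤ (f (p + 1) : ℝ) := by exact_mod_cast h
      rw [abs_sub_comm, abs_of_nonneg (by linarith)]; linarith
    · have h' : (f (p + 1) : ℝ) + ((t : ℝ) + 2) ≤ (f p : ℝ) := by exact_mod_cast h
      rw [abs_of_nonneg (by linarith)]; linarith
  linarith
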